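/- For any integers m ≥ 0, r ≥ 1 and any real x ∈ [0,1], a Binomial(m, 1-(1-x)^r) random variable is stochastically dominated by a Binomial(rm, x) random variable; that is, for every integer t, P(Bin(m, 1-(1-x)^r) ≥ t) ≤ P(Bin(rm, x) ≥ t). -/

import Mathlib

/-- `binomPr N k p` is the probability that a `Bin(N,p)` random variable equals `k`. -/
noncomputable def binomPr (N k : ℕ) (p : ℝ) : ℝ :=
  (N.choose k : ℝ) * p ^ k * (1 - p) ^ (N - k)

/-- Tail probability of a binomial. -/
noncomputable def binomTail (N : ℕ) (p : ℝ) (t : ℕ) : ℝ :=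
  ∑ k ∈ Finset.Icc t N, binomPr N k p

lemma binomPr_nonneg {p : ℝ} (h0 : 0 ≤ p) (h1 : p ≤ 1) (N k : ℕ) :
    0 ≤ binomPr N k p := by
  have : (0:ℝ) ≤ 1 - p := by linarith
  exact mul_nonneg (mul_nonneg (by positivity) (pow_nonneg h0 _)) (pow_nonneg this _)

lemma binomPr_of_lt {N k : ℕ} (h : N < k) (p : ℝ) : binomPr N k p = 0 := by
  simp [binomPr, Nat.choose_eq_zero_of_lt h]

lemma sum_binomPr (N : ℕ) (p : ℝ) :
    ∑ k ∈ Finset.range (N + 1), binomPr N k p = 1 := by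
  have h := add_pow p (1 - p) N
  have hp : p + (1 - p) = 1 := by ring
  rw [hp, one_pow] at h
  rw [show (1:ℝ) = ∑ k ∈ Finset.range (N+1), p ^ k * (1-p) ^ (N-k) * (N.choose k : ℝ) from h]
  exact Finset.sum_congr rfl fun k _ => by unfold binomPr; ring

lemma binomTail_nonneg {p : ℝ} (h0 : 0 ≤ p) (h1 : p ≤ 1) (N t : ℕ) :
    0 ≤ binomTail N p t :=
  Finset.sum_nonneg fun k _ => binomPr_nonneg h0 h1 N k

lemma binomTail_anti {p : ℝ} (h0 : 0 ≤ p) (h1 : p ≤ 1) (N : ℕ) {t t' : ℕ} (h : t ≤ t') :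
    binomTail N p t' ≤ binomTail N p t := by
  apply Finset.sum_le_sum_of_subset_of_nonneg (Finset.Icc_subset_Icc_left h)
  intro k _ _
  exact binomPr_nonneg h0 h1 N k

lemma binomPr_conv (N1 N2 k : ℕ) (p : ℝ) :
    binomPr (N1 + N2) k p =
      ∑ ij ∈ Finset.HasAntidiagonal.antidiagonal k, binomPr N1 ij.1 p * binomPr N2 ij.2 p := by
  unfold binomPr
  rw [Nat.add_choose_eq]
  push_cast
  rw [Finset.sum_mul, Finset.sum_mul]
  refine Finset.sum_congr rfl fun ij hij => ?_
  obtain ⟨i, j⟩ := ij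
  simp only [Finset.HasAntidiagonal.mem_antidiagonal] at hij
  by_cases hi : i ≤ N1
  · by_cases hj : j ≤ N2
    · by_cases hk : k ≤ N1 + N2
      · have h1 : N1 + N2 - k = (N1 - i) + (N2 - j) := by omega
        have h2 : k = i + j := hij.symm
        rw [h1, h2, pow_add, pow_add]
        ring
      · have h1 : N1 + N2 - k = (N1 - i) + (N2 - j) := by omega
        have h2 : k = i + j := hij.symm
        rw [h1, h2, pow_add, pow_add]
        ring
    · have hz : N2.choose j = 0 := Nat.choose_eq_zero_of_lt (by omega)
      rw [hz]
      simp
  · have hz : N1.choose i = 0 := Nat.choose_eq_zero_of_lt (by omega)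
    rw [hz]
    simp

lemma binomTail_conv (N1 N2 t : ℕ) (p : ℝ) :
    binomTail (N1 + N2) p t =
      ∑ j ∈ Finset.range (N2 + 1), binomPr N2 j p * binomTail N1 p (t - j) := by
  classical
  set A := (Finset.range (N1+1) ×ˢ Finset.range (N2+1)).filter (fun ij => t ≤ ij.1 + ij.2)
    with hA
  have hL : binomTail (N1+N2) p t = ∑ ij ∈ A, binomPr N1 ij.1 p * binomPr N2 ij.2 p := by
    unfold binomTail
    rw [Finset.sum_congr rfl (fun k _ => binomPr_conv N1 N2 k p)]
    rw [← Finset.sum_biUnion]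
    · refine (Finset.sum_subset ?_ ?_).symm
      · intro ij hij
        simp only [hA, Finset.mem_filter, Finset.mem_product, Finset.mem_range] at hij
        simp only [Finset.mem_biUnion, Finset.HasAntidiagonal.mem_antidiagonal, Finset.mem_Icc]
        exact ⟨ij.1 + ij.2, ⟨hij.2, by omega⟩, rfl⟩
      · intro ij hij hij'
        simp only [Finset.mem_biUnion, Finset.HasAntidiagonal.mem_antidiagonal, Finset.mem_Icc] at hij
        obtain ⟨k, ⟨hk1, hk2⟩, hk3⟩ := hij
        rcases lt_or_ge N1 ij.1 with h1 | h1
        · rw [binomPr_of_lt h1, zero_mul]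
        rcases lt_or_ge N2 ij.2 with h2 | h2
        · rw [binomPr_of_lt h2, mul_zero]
        exfalso
        apply hij'
        simp only [hA, Finset.mem_filter, Finset.mem_product, Finset.mem_range]
        exact ⟨⟨by omega, by omega⟩, by omega⟩
    · intro a _ b _ hab
      simp only [Function.onFun, Finset.disjoint_left, Finset.HasAntidiagonal.mem_antidiagonal]
      intro x h1 h2
      exact hab (by omega)
  have hR : ∑ j ∈ Finset.range (N2+1), binomPr N2 j p * binomTail N1 p (t - j)
      = ∑ ij ∈ A, binomPr N1 ij.1 p * binomPr N2 ij.2 p := by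
    rw [hA, Finset.sum_filter, Finset.sum_product_right]
    refine Finset.sum_congr rfl fun j _ => ?_
    unfold binomTail
    rw [Finset.mul_sum]
    have hset : Finset.Icc (t - j) N1
        = (Finset.range (N1+1)).filter (fun i => t ≤ i + j) := by
      ext i
      simp only [Finset.mem_Icc, Finset.mem_filter, Finset.mem_range]
      omega
    rw [hset, Finset.sum_filter]
    exact Finset.sum_congr rfl fun i _ => by split <;> ring
  rw [hL, hR]

/-- `Bin(m, 1-(1-x)^r)` is stochastically dominated by `Bin(r*m, x)`:
for every `t`, `P(Bin(m, 1-(1-x)^r) ≥ t) ≤ P(Bin(rm, x) ≥ t)`. -/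
theorem binomial_coupling_domination (m r : ℕ) (hr : 1 ≤ r) (x : ℝ)
    (hx : x ∈ Set.Icc (0 : ℝ) 1) (t : ℕ) :
    ∑ k ∈ Finset.Icc t m, binomPr m k (1 - (1 - x) ^ r) ≤
      ∑ k ∈ Finset.Icc t (r * m), binomPr (r * m) k x := by
  obtain ⟨hx0, hx1⟩ := hx
  have h1x0 : (0:ℝ) ≤ 1 - x := by linarith
  have h1x1 : 1 - x ≤ 1 := by linarith
  set q : ℝ := 1 - (1 - x) ^ r with hqdef
  have hpow0 : (0:ℝ) ≤ (1 - x) ^ r := pow_nonneg h1x0 r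
  have hpow1 : (1 - x) ^ r ≤ 1 := pow_le_one₀ h1x0 h1x1
  have hq0 : 0 ≤ q := by rw [hqdef]; linarith
  have hq1 : q ≤ 1 := by rw [hqdef]; linarith
  have hqsum : ∑ i ∈ Finset.range r, binomPr r (i+1) x = q := by
    have h := sum_binomPr r x
    rw [Finset.sum_range_succ'] at h
    have h0 : binomPr r 0 x = (1 - x) ^ r := by simp [binomPr]
    rw [h0] at h
    rw [hqdef]; linarith
  suffices h : ∀ n t', binomTail n q t' ≤ binomTail (r*n) x t' by
    have := h m t
    simpa [binomTail] using this
  intro n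
  induction n with
  | zero =>
    intro t'
    rw [Nat.mul_zero]
    rcases Nat.eq_zero_or_pos t' with h | h
    · subst h
      simp [binomTail, binomPr]
    · simp [binomTail, Finset.Icc_eq_empty (by omega : ¬ t' ≤ 0)]
  | succ n ih =>
    intro t'
    -- left side
    have hL : binomTail (n+1) q t' =
        (1 - q) * binomTail n q t' + q * binomTail n q (t' - 1) := by
      rw [binomTail_conv n 1 t' q, Finset.sum_range_succ, Finset.sum_range_succ,
        Finset.sum_range_zero]
      have e0 : binomPr 1 0 q = 1 - q := by simp [binomPr]
      have e1 : binomPr 1 1 q = q := by simp [binomPr]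
      rw [e0, e1]
      simp only [Nat.sub_zero, zero_add]
    -- right side
    have e : r * (n+1) = r * n + r := by ring
    have hR : binomTail (r*(n+1)) x t' =
        ∑ i ∈ Finset.range r, binomPr r (i+1) x * binomTail (r*n) x (t' - (i+1))
          + (1 - q) * binomTail (r*n) x t' := by
      rw [e, binomTail_conv (r*n) r t' x, Finset.sum_range_succ']
      have e0 : binomPr r 0 x = (1 - x) ^ r := by simp [binomPr]
      have hq' : 1 - q = (1 - x) ^ r := by rw [hqdef]; ring
      rw [e0, ← hq']
      simp only [Nat.sub_zero]
    rw [hL, hR]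
    have key : q * binomTail (r*n) x (t' - 1)
        ≤ ∑ i ∈ Finset.range r, binomPr r (i+1) x * binomTail (r*n) x (t' - (i+1)) := by
      rw [← hqsum, Finset.sum_mul]
      refine Finset.sum_le_sum fun i _ => ?_
      refine mul_le_mul_of_nonneg_left ?_ (binomPr_nonneg hx0 hx1 r (i+1))
      exact binomTail_anti hx0 hx1 (r*n) (by omega)
    have h1 : binomTail n q t' ≤ binomTail (r*n) x t' := ih t'
    have h2 : binomTail n q (t'-1) ≤ binomTail (r*n) x (t'-1) := ih (t'-1)
    have hq1' : (0:ℝ) ≤ 1 - q := by linarith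
    nlinarith [mul_le_mul_of_nonneg_left h1 hq1', mul_le_mul_of_nonneg_left h2 hq0]
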